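/- Let 𝕊 be a K×K {0,1}-matrix each of whose rows contains at least one entry 1, and S_1, …, S_K ∈ ℝ^{d×d}, with Kozyakin 𝕊-lift S^{(1)}, …, S^{(K)} ∈ ℝ^{Kd×Kd}. Then for every n ≥ 2 and every 𝕊-admissible word (i_0, …, i_{n-1}) ∈ {1,…,K}^n, one has ‖S^{(i_0)} ⋯ S^{(i_{n-1})}‖ ≥ ‖S_{i_0} ⋯ S_{i_{n-1}}‖, where ‖·‖ is the ℓ²-operator norm on matrices. -/

import Mathlib

open MeasureTheory Filter Matrix
open scoped Kronecker

/-- The ℓ²-operator norm of a real square matrix. -/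
noncomputable def l2OpNorm {ι : Type*} [Fintype ι] [DecidableEq ι]
    (A : Matrix ι ι ℝ) : ℝ :=
  ‖Matrix.toEuclideanCLM (𝕜 := ℝ) A‖

/-- The spectral radius of a real square matrix: the maximum of the absolute values
of its (complex) eigenvalues. -/
noncomputable def specRad {ι : Type*} [Fintype ι] [DecidableEq ι]
    (A : Matrix ι ι ℝ) : ℝ :=
  (spectralRadius ℂ (A.map (fun x => (x : ℂ)))).toReal

/-- The ordered product `S_{w 0} * S_{w 1} * ⋯ * S_{w (n-1)}`. -/
noncomputable def wordProd {K : ℕ} {ι : Type*} [Fintype ι] [DecidableEq ι]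
    (S : Fin K → Matrix ι ι ℝ) (n : ℕ) (w : ℕ → Fin K) : Matrix ι ι ℝ :=
  (List.ofFn fun k : Fin n => S (w k)).prod

/-- The word `(w 0, …, w (n-1))` is `𝕊`-admissible. -/
def Admissible {K : ℕ} (𝕊 : Matrix (Fin K) (Fin K) ℝ) (n : ℕ) (w : ℕ → Fin K) : Prop :=
  ∀ k, k + 1 < n → 𝕊 (w k) (w (k + 1)) = 1

/-- The word `(w 0, …, w (n-1))` is `𝕊`-periodically extendable. -/
def PerExt {K : ℕ} (𝕊 : Matrix (Fin K) (Fin K) ℝ) (n : ℕ) (w : ℕ → Fin K) : Prop :=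
  Admissible 𝕊 n w ∧ 𝕊 (w (n - 1)) (w 0) = 1

/-- The Kozyakin `𝕊`-lift `S^{(k)} = (δ_kᵀ 𝕊_k) ⊗ S_k`. -/
noncomputable def kozLift {K d : ℕ} (𝕊 : Matrix (Fin K) (Fin K) ℝ)
    (S : Fin K → Matrix (Fin d) (Fin d) ℝ) (k : Fin K) :
    Matrix (Fin K × Fin d) (Fin K × Fin d) ℝ :=
  (Matrix.vecMulVec (Pi.single k 1) (𝕊 k)) ⊗ₖ S k

lemma wordProd_succ {K : ℕ} {ι : Type*} [Fintype ι] [DecidableEq ι]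
    (S : Fin K → Matrix ι ι ℝ) (n : ℕ) (w : ℕ → Fin K) :
    wordProd S (n+1) w = S (w 0) * wordProd S n (fun k => w (k+1)) := by
  simp [wordProd, List.ofFn_succ, Fin.val_succ]

lemma wordProd_one {K : ℕ} {ι : Type*} [Fintype ι] [DecidableEq ι]
    (S : Fin K → Matrix ι ι ℝ) (w : ℕ → Fin K) :
    wordProd S 1 w = S (w 0) := by
  simp [wordProd]

lemma vecMulVec_mul_vecMulVec {m : Type*} [Fintype m] (a b c e : m → ℝ) :
    vecMulVec a b * vecMulVec c e = (b ⬝ᵥ c) • vecMulVec a e := by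
  ext i j
  simp only [Matrix.mul_apply, vecMulVec_apply, Matrix.smul_apply, dotProduct, smul_eq_mul,
    Finset.sum_mul]
  exact Finset.sum_congr rfl fun x _ => by ring

lemma kozProd {K d : ℕ} (𝕊 : Matrix (Fin K) (Fin K) ℝ)
    (S : Fin K → Matrix (Fin d) (Fin d) ℝ) :
    ∀ n, 1 ≤ n → ∀ w : ℕ → Fin K, Admissible 𝕊 n w →
      wordProd (kozLift 𝕊 S) n w =
        (Matrix.vecMulVec (Pi.single (w 0) 1) (𝕊 (w (n - 1)))) ⊗ₖ wordProd S n w := by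
  intro n
  induction n with
  | zero => omega
  | succ n ih =>
    intro _ w hadm
    rcases Nat.eq_zero_or_pos n with h0 | h1
    · subst h0
      simp [wordProd_one, kozLift]
    · have hadm' : Admissible 𝕊 n (fun k => w (k+1)) := fun k hk => hadm (k+1) (by omega)
      have hidx : n - 1 + 1 = n := by omega
      rw [wordProd_succ, wordProd_succ S, ih h1 _ hadm']
      show kozLift 𝕊 S (w 0) * _ = _
      rw [kozLift, ← mul_kronecker_mul, _root_.vecMulVec_mul_vecMulVec]
      have h1' : 𝕊 (w 0) ⬝ᵥ (Pi.single (w 1) 1 : Fin K → ℝ) = 1 := by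
        rw [dotProduct_single, mul_one]
        exact hadm 0 (by omega)
      rw [h1', one_smul]
      simp only [hidx, Nat.add_sub_cancel]

lemma norm_le_koz {K d : ℕ} (a j : Fin K) (r : Fin K → ℝ) (hrj : r j = 1)
    (P : Matrix (Fin d) (Fin d) ℝ) :
    l2OpNorm P ≤ l2OpNorm ((Matrix.vecMulVec (Pi.single a 1) r) ⊗ₖ P) := by
  set M := (Matrix.vecMulVec (Pi.single a 1) r) ⊗ₖ P with hM
  set T := Matrix.toEuclideanCLM (𝕜 := ℝ) M with hT
  refine ContinuousLinearMap.opNorm_le_bound _ (norm_nonneg T) fun x => ?_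
  set x' : Fin d → ℝ := WithLp.equiv _ _ x with hx'
  set v : Fin K × Fin d → ℝ := fun p => if p.1 = j then x' p.2 else 0 with hv
  set y : EuclideanSpace ℝ (Fin K × Fin d) := (WithLp.equiv _ _).symm v with hy
  have hny : ‖y‖ = ‖x‖ := by
    rw [EuclideanSpace.norm_eq, EuclideanSpace.norm_eq]
    congr 1
    have : ∀ p : Fin K × Fin d, y p = if p.1 = j then x p.2 else 0 := fun p => rfl
    simp only [this, Fintype.sum_prod_type, apply_ite (fun t : ℝ => ‖t‖ ^ 2), norm_zero]
    simp [Finset.sum_ite_eq']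
  have hMv : ∀ p : Fin K × Fin d, M.mulVec v p = (Pi.single a 1 : Fin K → ℝ) p.1 * P.mulVec x' p.2 := by
    rintro ⟨k, i⟩
    simp only [Matrix.mulVec, dotProduct, Fintype.sum_prod_type, hM,
      Matrix.kroneckerMap_apply, Matrix.vecMulVec_apply, hv, mul_ite, mul_zero,
      Finset.sum_ite_irrel, Finset.sum_const_zero, Finset.sum_ite_eq', Finset.mem_univ, if_true]
    rw [Finset.mul_sum]
    exact Finset.sum_congr rfl fun m _ => by rw [hrj]; ring
  have hTy : T y = (WithLp.equiv _ _).symm (M.mulVec v) := by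
    rw [hy, hT]
    rfl
  have hPx : Matrix.toEuclideanCLM (𝕜 := ℝ) P x = (WithLp.equiv _ _).symm (P.mulVec x') := by
    conv_lhs => rw [show x = (WithLp.equiv _ _).symm x' from
      ((WithLp.equiv _ _).symm_apply_apply x).symm]
    rfl
  have hnorm : ‖Matrix.toEuclideanCLM (𝕜 := ℝ) P x‖ = ‖T y‖ := by
    rw [hTy, hPx, EuclideanSpace.norm_eq, EuclideanSpace.norm_eq]
    congr 1
    have h1 : ∀ p : Fin K × Fin d,
        ((WithLp.equiv _ _).symm (M.mulVec v) : EuclideanSpace ℝ _) p = M.mulVec v p :=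
      fun _ => rfl
    have h2 : ∀ i : Fin d,
        ((WithLp.equiv _ _).symm (P.mulVec x') : EuclideanSpace ℝ _) i = P.mulVec x' i :=
      fun _ => rfl
    refine Eq.symm ?_
    simp only [h1, h2, hMv, Fintype.sum_prod_type]
    have h3 : ∀ (k : Fin K) (i : Fin d),
        ‖(Pi.single a 1 : Fin K → ℝ) k * P.mulVec x' i‖ ^ 2
          = ((Pi.single a 1 : Fin K → ℝ) k) ^ 2 * ‖P.mulVec x' i‖ ^ 2 := by
      intro k i
      rw [norm_mul, mul_pow, Real.norm_eq_abs, sq_abs]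
    simp only [h3, ← Finset.mul_sum, ← Finset.sum_mul]
    have h4 : ∑ k : Fin K, ((Pi.single a 1 : Fin K → ℝ) k) ^ 2 = 1 := by
      simp [Pi.single_apply, apply_ite (fun t : ℝ => t ^ 2)]
    rw [h4, one_mul]
  show ‖Matrix.toEuclideanCLM (𝕜 := ℝ) P x‖ ≤ ‖T‖ * ‖x‖
  rw [hnorm, ← hny]
  exact T.le_opNorm y

theorem stmt19 {K d : ℕ} (hK : 2 ≤ K) (hd : 1 ≤ d)
    (S : Fin K → Matrix (Fin d) (Fin d) ℝ)
    (𝕊 : Matrix (Fin K) (Fin K) ℝ) (h01 : ∀ i j, 𝕊 i j = 0 ∨ 𝕊 i j = 1)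
    (hrow : ∀ i, ∃ j, 𝕊 i j = 1)
    (n : ℕ) (hn : 2 ≤ n) (w : ℕ → Fin K)
    (hadm : Admissible 𝕊 n w) :
    l2OpNorm (wordProd S n w) ≤ l2OpNorm (wordProd (kozLift 𝕊 S) n w) := by
  obtain ⟨j, hj⟩ := hrow (w (n - 1))
  rw [kozProd 𝕊 S n (by omega) w hadm]
  exact norm_le_koz (w 0) j _ hj _
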